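/- arXiv:2302.07605 — 5 statements merged into one kernel-verified Lean document; each statement's English description precedes it below -/
import Mathlib

section
/- Let v > 2, T > 0, t₀ ∈ ℝ, let μ be the time-scaling function, and let a > 0, b > 0. Suppose V : [t₀, T + t₀) → ℝ is nonnegative, differentiable, and satisfies V'(t) ≤ −a·V(t) − b·(μ'(t)/μ(t))·V(t) for all t ∈ (t₀, T + t₀). Then for all t ∈ [t₀, T + t₀), V(t) ≤ V(t₀)·exp(−a(t − t₀))·(μ(t₀)/μ(t))^b = V(t₀)·exp(−a(t − t₀))·((T + t₀ − t)/T)^(v·b). -/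
open Set Filter

/-- The time-scaling function μ with parameters v, T and initial time t₀:
μ(t) = T^v/(T + t₀ − t)^v for t < T + t₀ and μ(t) = 1 for t ≥ T + t₀. -/
noncomputable def tsf (v T t₀ : ℝ) (t : ℝ) : ℝ :=
  if t < T + t₀ then T ^ v / (T + t₀ - t) ^ v else 1

/-- If V ≥ 0 is differentiable on [t₀, T + t₀) and V' ≤ −a·V − b·(μ'/μ)·V on (t₀, T + t₀)
with a, b > 0, then V(t) ≤ V(t₀)·exp(−a(t − t₀))·(μ(t₀)/μ(t))^b
= V(t₀)·exp(−a(t − t₀))·((T + t₀ − t)/T)^(v·b) on [t₀, T + t₀). -/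
theorem lyapunov_prescribed_time_bound (v T t₀ a b : ℝ) (hv : 2 < v) (hT : 0 < T)
    (ha : 0 < a) (hb : 0 < b) (V V' : ℝ → ℝ)
    (hV_nonneg : ∀ t ∈ Set.Ico t₀ (T + t₀), 0 ≤ V t)
    (hV_deriv : ∀ t ∈ Set.Ico t₀ (T + t₀), HasDerivAt V (V' t) t)
    (hV_ineq : ∀ t ∈ Set.Ioo t₀ (T + t₀),
      V' t ≤ -a * V t - b * (deriv (tsf v T t₀) t / tsf v T t₀ t) * V t) :
    ∀ t ∈ Set.Ico t₀ (T + t₀),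
      V t ≤ V t₀ * Real.exp (-a * (t - t₀)) * (tsf v T t₀ t₀ / tsf v T t₀ t) ^ b ∧
      V t₀ * Real.exp (-a * (t - t₀)) * (tsf v T t₀ t₀ / tsf v T t₀ t) ^ b
        = V t₀ * Real.exp (-a * (t - t₀)) * ((T + t₀ - t) / T) ^ (v * b) := by
  intro s hs
  obtain ⟨hs1, hs2⟩ := hs
  have hT0 : (0:ℝ) < T + t₀ - s := by linarith
  have htsf0 : tsf v T t₀ t₀ = 1 := by
    unfold tsf
    rw [if_pos (by linarith), show T + t₀ - t₀ = T from by ring,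
      div_self (Real.rpow_pos_of_pos hT v).ne']
  have htsfs : tsf v T t₀ s = T ^ v / (T + t₀ - s) ^ v := by
    unfold tsf; rw [if_pos (by linarith)]
  have heq : tsf v T t₀ t₀ / tsf v T t₀ s = ((T + t₀ - s) / T) ^ v := by
    rw [htsf0, htsfs, Real.div_rpow hT0.le hT.le, one_div_div]
  have heq2 : (tsf v T t₀ t₀ / tsf v T t₀ s) ^ b = ((T + t₀ - s) / T) ^ (v * b) := by
    rw [heq, ← Real.rpow_mul (by positivity)]
  refine ⟨?_, by rw [heq2]⟩
  rw [heq2]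
  set c := v * b with hc
  have hc0 : 0 < c := by positivity
  -- the auxiliary function
  set W : ℝ → ℝ := fun t => V t * Real.exp (a * (t - t₀)) * (T + t₀ - t) ^ (-c) with hWdef
  have hW : ∀ t ∈ Icc t₀ s, HasDerivAt W
      ((V' t + a * V t + c * (T + t₀ - t)⁻¹ * V t) *
        (Real.exp (a * (t - t₀)) * (T + t₀ - t) ^ (-c))) t := by
    intro t ht
    have htpos : 0 < T + t₀ - t := by linarith [ht.2]
    have hVt := hV_deriv t ⟨ht.1, by linarith [ht.2]⟩
    have hE : HasDerivAt (fun u => Real.exp (a * (u - t₀))) (Real.exp (a * (t - t₀)) * a) t := by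
      have h1 : HasDerivAt (fun u : ℝ => a * (u - t₀)) a t := by
        simpa using ((hasDerivAt_id t).sub_const t₀).const_mul a
      simpa using h1.exp
    have hlin : HasDerivAt (fun u : ℝ => T + t₀ - u) (-1) t := by
      exact ((hasDerivAt_const t (T + t₀)).sub (hasDerivAt_id' t)).congr_deriv (by norm_num)
    have hP : HasDerivAt (fun u : ℝ => (T + t₀ - u) ^ (-c)) (c * (T + t₀ - t) ^ (-c - 1)) t := by
      have h2 := hlin.rpow_const (p := -c) (Or.inl htpos.ne')
      convert h2 using 1; ring
    have h3 := (hVt.mul hE).mul hP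
    refine h3.congr_deriv ?_
    have hsplit : (T + t₀ - t) ^ (-c - 1) = (T + t₀ - t) ^ (-c) * (T + t₀ - t)⁻¹ := by
      rw [show -c - 1 = -c + (-1) from by ring, Real.rpow_add htpos, Real.rpow_neg_one]
    rw [hsplit, Pi.mul_apply]; ring
  have hanti : AntitoneOn W (Icc t₀ s) := by
    apply antitoneOn_of_deriv_nonpos (convex_Icc t₀ s)
    · exact fun t ht => (hW t ht).continuousAt.continuousWithinAt
    · intro t ht
      rw [interior_Icc] at ht
      exact (hW t (Ioo_subset_Icc_self ht)).differentiableAt.differentiableWithinAt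
    · intro t ht
      rw [interior_Icc] at ht
      have ht' : t ∈ Icc t₀ s := Ioo_subset_Icc_self ht
      rw [(hW t ht').deriv]
      have htpos : 0 < T + t₀ - t := by linarith [ht'.2]
      have htlt : t < T + t₀ := by linarith [ht'.2]
      have hineq := hV_ineq t ⟨ht.1, htlt⟩
      -- compute deriv tsf / tsf
      have hlin : HasDerivAt (fun u : ℝ => T + t₀ - u) (-1) t := by
        exact ((hasDerivAt_const t (T + t₀)).sub (hasDerivAt_id' t)).congr_deriv (by norm_num)
      have hfun : (fun u => T ^ v * (T + t₀ - u) ^ (-v)) =ᶠ[nhds t] tsf v T t₀ := by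
        filter_upwards [Iio_mem_nhds htlt] with u hu
        have hu' : u < T + t₀ := mem_Iio.mp hu
        unfold tsf
        rw [if_pos hu', Real.rpow_neg (by linarith [hu'] : (0:ℝ) ≤ T + t₀ - u),
          div_eq_mul_inv]
      have hf : HasDerivAt (fun u => T ^ v * (T + t₀ - u) ^ (-v))
          (T ^ v * (v * (T + t₀ - t) ^ (-v - 1))) t := by
        have h2 := (hlin.rpow_const (p := -v) (Or.inl htpos.ne')).const_mul (T ^ v)
        refine h2.congr_deriv ?_; ring
      have hderiv : deriv (tsf v T t₀) t = T ^ v * (v * (T + t₀ - t) ^ (-v - 1)) := by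
        rw [← hfun.deriv_eq, hf.deriv]
      have htsft : tsf v T t₀ t = T ^ v / (T + t₀ - t) ^ v := by
        unfold tsf; rw [if_pos htlt]
      have hTv : (0:ℝ) < T ^ v := Real.rpow_pos_of_pos hT v
      have hxv : (0:ℝ) < (T + t₀ - t) ^ v := Real.rpow_pos_of_pos htpos v
      have hratio : deriv (tsf v T t₀) t / tsf v T t₀ t = v * (T + t₀ - t)⁻¹ := by
        rw [hderiv, htsft]
        have hmul : (T + t₀ - t) ^ (-v - 1) * (T + t₀ - t) ^ v = (T + t₀ - t)⁻¹ := by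
          rw [← Real.rpow_add htpos, show -v - 1 + v = (-1:ℝ) from by ring,
            Real.rpow_neg_one]
        rw [div_div_eq_mul_div]
        rw [show T ^ v * (v * (T + t₀ - t) ^ (-v - 1)) * (T + t₀ - t) ^ v
            = T ^ v * (v * ((T + t₀ - t) ^ (-v - 1) * (T + t₀ - t) ^ v)) from by ring, hmul]
        field_simp
      rw [hratio] at hineq
      have hVnn := hV_nonneg t ⟨ht'.1, htlt⟩
      have hbr : V' t + a * V t + c * (T + t₀ - t)⁻¹ * V t ≤ 0 := by
        have hcc : c * (T + t₀ - t)⁻¹ * V t = b * (v * (T + t₀ - t)⁻¹) * V t := by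
          rw [hc]; ring
        linarith [hineq, hcc.le, hcc.ge]
      have hpos : (0:ℝ) ≤ Real.exp (a * (t - t₀)) * (T + t₀ - t) ^ (-c) := by positivity
      exact mul_nonpos_iff.mpr (Or.inr ⟨hbr, hpos⟩)
  have hWs : W s ≤ W t₀ := hanti (left_mem_Icc.mpr hs1) (right_mem_Icc.mpr hs1) hs1
  have hEpos : 0 < Real.exp (a * (s - t₀)) := Real.exp_pos _
  have hPc : 0 < (T + t₀ - s) ^ c := Real.rpow_pos_of_pos hT0 _
  have hTc : 0 < T ^ c := Real.rpow_pos_of_pos hT _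
  have hinv : (T + t₀ - s) ^ (-c) = ((T + t₀ - s) ^ c)⁻¹ := by rw [Real.rpow_neg hT0.le]
  have hinvT : T ^ (-c) = (T ^ c)⁻¹ := by rw [Real.rpow_neg hT.le]
  have hWs2 : V s * Real.exp (a * (s - t₀)) * ((T + t₀ - s) ^ c)⁻¹ ≤ V t₀ * (T ^ c)⁻¹ := by
    have h4 := hWs
    simp only [hWdef] at h4
    rw [show T + t₀ - t₀ = T from by ring, show a * (t₀ - t₀) = 0 from by ring,
      Real.exp_zero, mul_one, hinv, hinvT] at h4
    exact h4
  have h1 : ((T + t₀ - s) / T) ^ c = (T + t₀ - s) ^ c * (T ^ c)⁻¹ := by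
    rw [Real.div_rpow hT0.le hT.le, div_eq_mul_inv]
  have h2 : Real.exp (-a * (s - t₀)) = (Real.exp (a * (s - t₀)))⁻¹ := by
    rw [show -a * (s - t₀) = -(a * (s - t₀)) from by ring, Real.exp_neg]
  rw [h1, h2]
  calc V s = V s * Real.exp (a * (s - t₀)) * ((T + t₀ - s) ^ c)⁻¹ *
        ((T + t₀ - s) ^ c * (Real.exp (a * (s - t₀)))⁻¹) := by
        field_simp
    _ ≤ V t₀ * (T ^ c)⁻¹ * ((T + t₀ - s) ^ c * (Real.exp (a * (s - t₀)))⁻¹) :=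
        mul_le_mul_of_nonneg_right hWs2 (by positivity)
    _ = V t₀ * (Real.exp (a * (s - t₀)))⁻¹ * ((T + t₀ - s) ^ c * (T ^ c)⁻¹) := by ring
end

section
/- Let v > 2, T > 0, t₀ ∈ ℝ, let μ be the time-scaling function extended by μ(t) = 1 for t ≥ T + t₀, and let a > 0, b > 0. Suppose V : [t₀, ∞) → ℝ is nonnegative, continuous, differentiable on (t₀, T + t₀) ∪ (T + t₀, ∞), and satisfies V'(t) ≤ −a·V(t) − b·(μ'(t)/μ(t))·V(t) wherever differentiable. Then V(t) → 0 as t → (T + t₀)⁻, and V(t) = 0 for all t ≥ T + t₀ (prescribed-time convergence with prescribed time T). -/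
open Set Filter

/-- Prescribed-time convergence: if V ≥ 0 is continuous on [t₀, ∞), differentiable on
(t₀, T + t₀) ∪ (T + t₀, ∞) and satisfies V' ≤ −a·V − b·(μ'/μ)·V wherever differentiable
(a, b > 0), then V(t) → 0 as t → (T + t₀)⁻ and V(t) = 0 for all t ≥ T + t₀. -/
theorem lyapunov_prescribed_time_convergence (v T t₀ a b : ℝ) (hv : 2 < v) (hT : 0 < T)
    (ha : 0 < a) (hb : 0 < b) (V V' : ℝ → ℝ)
    (hV_nonneg : ∀ t ∈ Set.Ici t₀, 0 ≤ V t)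
    (hV_cont : ContinuousOn V (Set.Ici t₀))
    (hV_deriv : ∀ t ∈ Set.Ioo t₀ (T + t₀) ∪ Set.Ioi (T + t₀), HasDerivAt V (V' t) t)
    (hV_ineq : ∀ t ∈ Set.Ioo t₀ (T + t₀) ∪ Set.Ioi (T + t₀),
      V' t ≤ -a * V t - b * (deriv (tsf v T t₀) t / tsf v T t₀ t) * V t) :
    Filter.Tendsto V (nhdsWithin (T + t₀) (Set.Iio (T + t₀))) (nhds 0) ∧
    ∀ t, T + t₀ ≤ t → V t = 0 := by
  set s : ℝ := T + t₀ with hs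
  have hv0 : 0 < v := by linarith
  have ht0s : t₀ < s := by simp [hs]; linarith
  set c : ℝ := b * v with hc
  have hc0 : 0 < c := mul_pos hb hv0
  -- ratio of deriv tsf / tsf on Ioo t₀ s
  have hratio : ∀ t ∈ Set.Ioo t₀ s, deriv (tsf v T t₀) t / tsf v T t₀ t = v / (s - t) := by
    intro t ht
    have hd : 0 < s - t := by linarith [ht.2]
    have hTv : (0:ℝ) < T ^ v := Real.rpow_pos_of_pos hT v
    have heq : tsf v T t₀ =ᶠ[nhds t] fun x => T ^ v * (s - x) ^ (-v) := by
      filter_upwards [Iio_mem_nhds ht.2] with x hx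
      have hx' : 0 < s - x := by simpa [sub_pos] using hx
      simp only [tsf, if_pos (show x < T + t₀ from hx)]
      rw [Real.rpow_neg hx'.le, div_eq_mul_inv]
    have hinner : HasDerivAt (fun x : ℝ => s - x) (-1) t := by
      simpa using (hasDerivAt_id t).const_sub s
    have houter := (Real.hasDerivAt_rpow_const (x := s - t) (p := -v)
      (Or.inl hd.ne')).comp t hinner
    have hder : HasDerivAt (fun x => T ^ v * (s - x) ^ (-v))
        (T ^ v * (-v * (s - t) ^ (-v - 1) * -1)) t := houter.const_mul _
    have hdtsf : deriv (tsf v T t₀) t = T ^ v * (-v * (s - t) ^ (-v - 1) * -1) := by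
      rw [Filter.EventuallyEq.deriv_eq heq, hder.deriv]
    have htsf : tsf v T t₀ t = T ^ v * (s - t) ^ (-v) := heq.self_of_nhds
    rw [hdtsf, htsf]
    have h1 : (s - t) ^ (-v - 1) = (s - t) ^ (-v) * (s - t)⁻¹ := by
      rw [← Real.rpow_neg_one (s - t), ← Real.rpow_add hd]
      ring_nf
    rw [h1]
    have h2 : (s - t) ^ (-v) ≠ 0 := (Real.rpow_pos_of_pos hd _).ne'
    field_simp
  -- V s = ... first: the decay bound on Ico t₁ s
  set t₁ : ℝ := t₀ + T / 2 with ht₁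
  have ht₁mem : t₁ ∈ Set.Ioo t₀ s := by constructor <;> (simp [ht₁, hs]; linarith)
  set g : ℝ → ℝ := fun x => (s - x) ^ (-c) with hg
  set h : ℝ → ℝ := fun x => V x * g x with hh
  have hg_pos : ∀ x ∈ Set.Iio s, 0 < g x := fun x hx =>
    Real.rpow_pos_of_pos (by simpa [sub_pos] using hx) _
  have hg_deriv : ∀ x ∈ Set.Ioo t₀ s,
      HasDerivAt g (-c * (s - x) ^ (-c - 1) * -1) x := by
    intro x hx
    have hd : 0 < s - x := by linarith [hx.2]
    have hinner : HasDerivAt (fun y : ℝ => s - y) (-1) x := by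
      simpa using (hasDerivAt_id x).const_sub s
    exact (Real.hasDerivAt_rpow_const (x := s - x) (p := -c) (Or.inl hd.ne')).comp x hinner
  have hh_deriv : ∀ x ∈ Set.Ioo t₀ s,
      HasDerivAt h (V' x * g x + V x * (-c * (s - x) ^ (-c - 1) * -1)) x := by
    intro x hx
    exact (hV_deriv x (Or.inl hx)).mul (hg_deriv x hx)
  have hh_deriv_nonpos : ∀ x ∈ Set.Ioo t₀ s, deriv h x ≤ 0 := by
    intro x hx
    have hd : 0 < s - x := by linarith [hx.2]
    rw [(hh_deriv x hx).deriv]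
    have hineq := hV_ineq x (Or.inl hx)
    rw [hratio x hx] at hineq
    have hgx : 0 < g x := hg_pos x hx.2
    have hVx : 0 ≤ V x := hV_nonneg x (le_of_lt hx.1)
    have key : g x = (s - x) ^ (-c - 1) * (s - x) := by
      rw [hg]
      rw [← Real.rpow_add_one hd.ne' (-c-1)]
      ring_nf
    have h1 : V' x * g x ≤ (-a * V x - b * (v / (s - x)) * V x) * g x :=
      mul_le_mul_of_nonneg_right hineq hgx.le
    have h2 : (-a * V x - b * (v / (s - x)) * V x) * g x
        + V x * (-c * (s - x) ^ (-c - 1) * -1) = -a * V x * g x := by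
      rw [key]; field_simp; ring
    nlinarith [mul_nonneg (mul_nonneg ha.le hVx) hgx.le]
  have hh_anti : AntitoneOn h (Set.Ico t₁ s) := by
    have hsub : Set.Ico t₁ s ⊆ Set.Ici t₀ := fun x hx => le_trans ht₁mem.1.le hx.1
    have hcont : ContinuousOn h (Set.Ico t₁ s) := by
      apply ContinuousOn.mul (hV_cont.mono hsub)
      intro x hx
      have hd : 0 < s - x := by linarith [hx.2]
      exact ((Real.continuousAt_rpow_const _ _ (Or.inl hd.ne')).comp
        ((continuous_const.sub continuous_id).continuousAt)).continuousWithinAt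
    apply antitoneOn_of_deriv_nonpos (convex_Ico t₁ s) hcont
    · intro x hx
      rw [interior_Ico] at hx
      exact ((hh_deriv x ⟨lt_trans ht₁mem.1 hx.1, hx.2⟩).differentiableAt).differentiableWithinAt
    · intro x hx
      rw [interior_Ico] at hx
      exact hh_deriv_nonpos x ⟨lt_trans ht₁mem.1 hx.1, hx.2⟩
  set C : ℝ := h t₁ with hC
  have hbound : ∀ x ∈ Set.Ico t₁ s, V x ≤ C * (s - x) ^ c := by
    intro x hx
    have hd : 0 < s - x := by linarith [hx.2]
    have h1 : h x ≤ C := hh_anti (Set.left_mem_Ico.mpr ht₁mem.2) hx hx.1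
    have h2 : g x * (s - x) ^ c = 1 := by
      rw [hg, ← Real.rpow_add hd]
      simp
    have := mul_le_mul_of_nonneg_right h1 (Real.rpow_pos_of_pos hd c).le
    calc V x = V x * (g x * (s - x) ^ c) := by rw [h2, mul_one]
      _ = h x * (s - x) ^ c := by rw [hh]; ring
      _ ≤ C * (s - x) ^ c := this
  -- Tendsto part
  have htend : Filter.Tendsto V (nhdsWithin s (Set.Iio s)) (nhds 0) := by
    have hupper : Filter.Tendsto (fun x => C * (s - x) ^ c)
        (nhdsWithin s (Set.Iio s)) (nhds 0) := by
      have h1 : Filter.Tendsto (fun x : ℝ => s - x) (nhdsWithin s (Set.Iio s)) (nhds 0) :=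
        ((continuous_const.sub continuous_id).tendsto' s 0 (by simp [hs])).mono_left
          nhdsWithin_le_nhds
      have h2 : Filter.Tendsto (fun y : ℝ => y ^ c) (nhds 0) (nhds 0) := by
        have := (Real.continuousAt_rpow_const 0 c (Or.inr hc0.le)).tendsto
        rwa [Real.zero_rpow hc0.ne'] at this
      have := (h2.comp h1).const_mul C
      simpa using this
    apply tendsto_of_tendsto_of_tendsto_of_le_of_le' tendsto_const_nhds hupper
    · filter_upwards [Ico_mem_nhdsLT_of_mem ⟨ht₁mem.2, le_refl s⟩] with x hx
      exact hV_nonneg x (le_trans ht₁mem.1.le hx.1)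
    · filter_upwards [Ico_mem_nhdsLT_of_mem ⟨ht₁mem.2, le_refl s⟩] with x hx
      exact hbound x hx
  refine ⟨htend, ?_⟩
  -- V s = 0
  have hVs : V s = 0 := by
    have h1 : Filter.Tendsto V (nhdsWithin s (Set.Iio s)) (nhds (V s)) := by
      have := (hV_cont.continuousWithinAt (Set.mem_Ici.mpr ht0s.le)).tendsto
      refine this.mono_left ?_
      rw [← nhdsWithin_Ioo_eq_nhdsLT ht0s]
      exact nhdsWithin_mono s (fun x hx => le_of_lt hx.1)
    exact tendsto_nhds_unique h1 htend
  -- tsf deriv = 0 on Ioi s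
  have hdtsf0 : ∀ t ∈ Set.Ioi s, deriv (tsf v T t₀) t = 0 := by
    intro t ht
    have heq : tsf v T t₀ =ᶠ[nhds t] fun _ => 1 := by
      filter_upwards [Ioi_mem_nhds ht] with x hx
      simp [tsf, not_lt.mpr (le_of_lt (show T + t₀ < x from hx))]
    rw [Filter.EventuallyEq.deriv_eq heq, deriv_const]
  have hanti : AntitoneOn V (Set.Ici s) := by
    apply antitoneOn_of_deriv_nonpos (convex_Ici s)
      (hV_cont.mono (Set.Ici_subset_Ici.mpr ht0s.le))
    · intro x hx
      rw [interior_Ici] at hx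
      exact (hV_deriv x (Or.inr hx)).differentiableAt.differentiableWithinAt
    · intro x hx
      rw [interior_Ici] at hx
      rw [(hV_deriv x (Or.inr hx)).deriv]
      have := hV_ineq x (Or.inr hx)
      rw [hdtsf0 x hx] at this
      simp only [zero_div, mul_zero, zero_mul, sub_zero] at this
      have hVx : 0 ≤ V x := hV_nonneg x (le_trans ht0s.le (le_of_lt hx))
      nlinarith
  intro t ht
  have h1 : V t ≤ V s := hanti (Set.self_mem_Ici) ht ht
  have h2 : 0 ≤ V t := hV_nonneg t (le_trans ht0s.le ht)
  linarith [hVs ▸ h1]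
end

section
/- Let G be a connected simple graph on the vertex set Fin N with N ≥ 1, let L ∈ ℝ^{N×N} be its graph Laplacian matrix, and let B = diag(b₁, …, b_N) be a diagonal matrix with each b_i ∈ {0, 1} and b_i = 1 for at least one index i. Then the matrix H = L + B is symmetric and positive definite. -/
open Matrix

/-- Lemma 2: for a connected simple graph G on N ≥ 1 vertices with Laplacian L, and a
diagonal matrix B = diag(b₁,…,b_N) with b_i ∈ {0,1} and b_i = 1 for at least one i,
the matrix H = L + B is symmetric and positive definite. -/
theorem lap_plus_pinning_posDef (N : ℕ) (hN : 1 ≤ N)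
    (G : SimpleGraph (Fin N)) [DecidableRel G.Adj] (hconn : G.Connected)
    (b : Fin N → ℝ) (hb : ∀ i, b i = 0 ∨ b i = 1) (hex : ∃ i, b i = 1) :
    (G.lapMatrix ℝ + Matrix.diagonal b).IsSymm ∧
    (G.lapMatrix ℝ + Matrix.diagonal b).PosDef := by
  have hbnn : ∀ i, (0:ℝ) ≤ b i := fun i => by rcases hb i with h | h <;> simp [h]
  have hLsd := SimpleGraph.posSemidef_lapMatrix ℝ G
  have hBsd : (Matrix.diagonal b).PosSemidef := .diagonal hbnn
  have hsymm : (G.lapMatrix ℝ + Matrix.diagonal b).IsSymm := by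
    rw [Matrix.IsSymm, Matrix.transpose_add, (SimpleGraph.isSymm_lapMatrix (R := ℝ) (G := G)),
      Matrix.diagonal_transpose]
  refine ⟨hsymm, Matrix.PosDef.of_dotProduct_mulVec_pos (Matrix.IsHermitian.add hLsd.1 hBsd.1) fun x hx => ?_⟩
  have hL : (0:ℝ) ≤ star x ⬝ᵥ (G.lapMatrix ℝ *ᵥ x) := hLsd.dotProduct_mulVec_nonneg x
  have hB : (0:ℝ) ≤ star x ⬝ᵥ (Matrix.diagonal b *ᵥ x) := hBsd.dotProduct_mulVec_nonneg x
  rw [Matrix.add_mulVec, dotProduct_add]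
  rcases lt_or_eq_of_le (add_nonneg hL hB) with hpos | heq
  · exact hpos
  -- both summands are zero
  have hL0 : star x ⬝ᵥ (G.lapMatrix ℝ *ᵥ x) = 0 := by linarith
  have hB0 : star x ⬝ᵥ (Matrix.diagonal b *ᵥ x) = 0 := by linarith
  exfalso
  apply hx
  -- from hL0 : x is constant on the connected graph
  have hconst : ∀ i j, x i = x j := by
    intro i j
    have := (SimpleGraph.lapMatrix_toLinearMap₂'_apply'_eq_zero_iff_forall_reachable G x).mp
      (by rw [Matrix.toLinearMap₂'_apply']; simpa using hL0)
    exact this i j (hconn.preconnected i j)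
  -- from hB0 : x i₀ = 0 where b i₀ = 1
  obtain ⟨i₀, hi₀⟩ := hex
  have hsum : ∑ i, b i * (x i)^2 = 0 := by
    rw [← hB0]
    simp [dotProduct, Matrix.mulVec_diagonal, sq]
    ring_nf
    congr 1; ext i; ring
  have hterm : ∀ i ∈ Finset.univ, (0:ℝ) ≤ b i * (x i)^2 :=
    fun i _ => mul_nonneg (hbnn i) (sq_nonneg _)
  have hzero : b i₀ * (x i₀)^2 = 0 :=
    (Finset.sum_eq_zero_iff_of_nonneg hterm).mp hsum i₀ (Finset.mem_univ i₀)
  have hx0 : x i₀ = 0 := by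
    rw [hi₀, one_mul] at hzero
    exact pow_eq_zero_iff (by norm_num) |>.mp hzero
  funext j
  simp [hconst j i₀, hx0]
end

section
/- Let H ∈ ℝ^{N×N} be symmetric positive definite, let A₀ ∈ ℝ^{n×n}, B₀ ∈ ℝ^{n×m}, and let P₀ ∈ ℝ^{n×n} be symmetric positive definite satisfying the Riccati equation A₀ᵀ P₀ + P₀ A₀ − P₀ B₀ B₀ᵀ P₀ + I_n = 0. Let C = diag(c₁, …, c_N) with every c_i ≥ 1/λ_min(H). Then for every ξ ∈ ℝ^{Nn}: ξᵀ (H ⊗ (A₀ᵀ P₀ + P₀ A₀) − H C H ⊗ P₀ B₀ B₀ᵀ P₀) ξ ≤ −λ_min(H)·‖ξ‖² ≤ −(λ_min(H)/λ_max(H ⊗ P₀)) · ξᵀ (H ⊗ P₀) ξ. -/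
open Matrix
open scoped Kronecker

/-- Euclidean norm of a finitely-indexed real vector. -/
noncomputable def enorm {ι : Type*} [Fintype ι] (x : ι → ℝ) : ℝ :=
  ‖(EuclideanSpace.equiv ι ℝ).symm x‖

section Aux

variable {ι κ : Type*} [Fintype ι] [DecidableEq ι] [Fintype κ] [DecidableEq κ]

lemma real_dot_nonneg {M : Matrix ι ι ℝ} (hM : M.PosSemidef) (x : ι → ℝ) :
    0 ≤ x ⬝ᵥ M *ᵥ x := by
  simpa using hM.dotProduct_mulVec_nonneg x

lemma real_smul_posSemidef {M : Matrix ι ι ℝ} (hM : M.PosSemidef) {r : ℝ} (hr : 0 ≤ r) :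
    (r • M).PosSemidef := by
  exact hM.smul hr

lemma kron_transpose {l p : Type*} (A : Matrix ι l ℝ) (B : Matrix κ p ℝ) :
    (A ⊗ₖ B)ᴴ = Aᴴ ⊗ₖ Bᴴ := by
  ext ⟨i, j⟩ ⟨k, l⟩
  simp [conjTranspose_apply, kroneckerMap_apply]

lemma kron_posSemidef {A : Matrix ι ι ℝ} {B : Matrix κ κ ℝ}
    (hA : A.PosSemidef) (hB : B.PosSemidef) : (A ⊗ₖ B).PosSemidef := by
  exact hA.kronecker hB

lemma sub_kron {l p : Type*} (A B : Matrix ι l ℝ) (C : Matrix κ p ℝ) :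
    (A - B) ⊗ₖ C = A ⊗ₖ C - B ⊗ₖ C := by
  ext ⟨i, j⟩ ⟨k, l⟩
  simp [kroneckerMap_apply, sub_mul]

lemma kron_sub {l p : Type*} (A : Matrix ι l ℝ) (B C : Matrix κ p ℝ) :
    A ⊗ₖ (B - C) = A ⊗ₖ B - A ⊗ₖ C := by
  ext ⟨i, j⟩ ⟨k, l⟩
  simp [kroneckerMap_apply, mul_sub]

lemma conj_shift (U D : Matrix ι ι ℝ) (hU : U * Uᴴ = 1) (c : ℝ) :
    U * D * Uᴴ - c • 1 = U * (D - c • 1) * Uᴴ := by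
  rw [mul_sub, sub_mul, mul_smul_comm, smul_mul_assoc, mul_one, hU]

lemma shift_general_lower {M : Matrix ι ι ℝ} (hM : M.IsHermitian) (c : ℝ)
    (hc : ∀ i, c ≤ hM.eigenvalues i) : (M - c • 1).PosSemidef := by
  have hU : (hM.eigenvectorUnitary : Matrix ι ι ℝ) *
      (hM.eigenvectorUnitary : Matrix ι ι ℝ)ᴴ = 1 := by
    rw [← Matrix.star_eq_conjTranspose]
    exact Matrix.mem_unitaryGroup_iff.mp hM.eigenvectorUnitary.2
  rw [hM.spectral_theorem, Unitary.conjStarAlgAut_apply, Matrix.star_eq_conjTranspose, conj_shift _ _ hU]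
  apply Matrix.PosSemidef.mul_mul_conjTranspose_same
  rw [Matrix.smul_one_eq_diagonal, Matrix.diagonal_sub]
  refine Matrix.PosSemidef.diagonal fun i => ?_
  simpa [RCLike.ofReal_real_eq_id] using sub_nonneg.mpr (hc i)

lemma shift_general_upper {M : Matrix ι ι ℝ} (hM : M.IsHermitian) (c : ℝ)
    (hc : ∀ i, hM.eigenvalues i ≤ c) : (c • 1 - M).PosSemidef := by
  have hU : (hM.eigenvectorUnitary : Matrix ι ι ℝ) *
      (hM.eigenvectorUnitary : Matrix ι ι ℝ)ᴴ = 1 := by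
    rw [← Matrix.star_eq_conjTranspose]
    exact Matrix.mem_unitaryGroup_iff.mp hM.eigenvectorUnitary.2
  have key : c • (1 : Matrix ι ι ℝ) - M =
      (hM.eigenvectorUnitary : Matrix ι ι ℝ) *
        (c • 1 - Matrix.diagonal (RCLike.ofReal ∘ hM.eigenvalues)) *
        (hM.eigenvectorUnitary : Matrix ι ι ℝ)ᴴ := by
    rw [mul_sub, sub_mul, mul_smul_comm, smul_mul_assoc, mul_one, hU]
    conv_lhs => rw [hM.spectral_theorem, Unitary.conjStarAlgAut_apply, Matrix.star_eq_conjTranspose]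
  rw [key]
  apply Matrix.PosSemidef.mul_mul_conjTranspose_same
  rw [Matrix.smul_one_eq_diagonal, Matrix.diagonal_sub]
  refine Matrix.PosSemidef.diagonal fun i => ?_
  simpa [RCLike.ofReal_real_eq_id] using sub_nonneg.mpr (hc i)

lemma shift_inf [Nonempty ι] {M : Matrix ι ι ℝ} (hM : M.IsHermitian) :
    (M - (⨅ i, hM.eigenvalues i) • 1).PosSemidef :=
  shift_general_lower hM _ fun i => ciInf_le (Finite.bddBelow_range _) i

lemma shift_sup [Nonempty ι] {M : Matrix ι ι ℝ} (hM : M.IsHermitian) :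
    ((⨆ i, hM.eigenvalues i) • 1 - M).PosSemidef :=
  shift_general_upper hM _ fun i => le_ciSup (Finite.bddAbove_range _) i

lemma enorm_sq (x : ι → ℝ) : (_root_.enorm x) ^ 2 = x ⬝ᵥ x := by
  have h : _root_.enorm x = Real.sqrt (∑ i, x i ^ 2) := by
    rw [_root_.enorm, EuclideanSpace.norm_eq]
    congr 1
    refine Finset.sum_congr rfl fun i _ => ?_
    simp [sq_abs]
  rw [h, Real.sq_sqrt (by positivity)]
  simp [dotProduct, sq]

lemma single_dot (M : Matrix ι ι ℝ) (i : ι) :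
    Pi.single i (1 : ℝ) ⬝ᵥ M *ᵥ Pi.single i 1 = M i i := by
  simp [dotProduct, mulVec, Pi.single_apply, Finset.mul_sum]

lemma posdef_diag_pos {M : Matrix ι ι ℝ} (hM : M.PosDef) (i : ι) : 0 < M i i := by
  have h := hM.dotProduct_mulVec_pos (x := Pi.single i 1) (by
    intro h
    have := congrFun h i
    simp at this)
  simpa [single_dot] using h

end Aux

/-- For H symmetric positive definite, P₀ symmetric positive definite solving the Riccati
equation A₀ᵀ P₀ + P₀ A₀ − P₀ B₀ B₀ᵀ P₀ + I = 0, and C = diag(c₁,…,c_N) with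
c_i ≥ 1/λ_min(H), for every ξ:
ξᵀ (H ⊗ (A₀ᵀP₀ + P₀A₀) − H C H ⊗ P₀B₀B₀ᵀP₀) ξ ≤ −λ_min(H)‖ξ‖²
  ≤ −(λ_min(H)/λ_max(H ⊗ P₀)) ξᵀ (H ⊗ P₀) ξ. -/
theorem observer_quadratic_form_bound (N n m : ℕ) (hN : 0 < N) (hn : 0 < n)
    (H : Matrix (Fin N) (Fin N) ℝ) (hH : H.PosDef)
    (A₀ P₀ : Matrix (Fin n) (Fin n) ℝ) (B₀ : Matrix (Fin n) (Fin m) ℝ)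
    (hP₀ : P₀.PosDef)
    (hRic : A₀ᵀ * P₀ + P₀ * A₀ - P₀ * B₀ * B₀ᵀ * P₀ + 1 = 0)
    (c : Fin N → ℝ) (hc : ∀ i, 1 / (⨅ j, hH.1.eigenvalues j) ≤ c i)
    (hKron : (H ⊗ₖ P₀).IsHermitian) :
    ∀ ξ : Fin N × Fin n → ℝ,
      ξ ⬝ᵥ ((H ⊗ₖ (A₀ᵀ * P₀ + P₀ * A₀))
          - ((H * Matrix.diagonal c * H) ⊗ₖ (P₀ * B₀ * B₀ᵀ * P₀))) *ᵥ ξ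
        ≤ -(⨅ j, hH.1.eigenvalues j) * (_root_.enorm ξ) ^ 2 ∧
      -(⨅ j, hH.1.eigenvalues j) * (_root_.enorm ξ) ^ 2
        ≤ -((⨅ j, hH.1.eigenvalues j) / (⨆ p, hKron.eigenvalues p))
            * (ξ ⬝ᵥ (H ⊗ₖ P₀) *ᵥ ξ) := by
  haveI : Nonempty (Fin N) := ⟨⟨0, hN⟩⟩
  haveI : Nonempty (Fin n) := ⟨⟨0, hn⟩⟩
  intro ξ
  set lam := ⨅ j, hH.1.eigenvalues j with hlamdef
  have hlampos : 0 < lam := by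
    obtain ⟨i0, hi0⟩ := Finite.exists_min hH.1.eigenvalues
    have h : lam = hH.1.eigenvalues i0 :=
      le_antisymm (ciInf_le (Finite.bddBelow_range _) i0) (le_ciInf hi0)
    rw [h]
    exact hH.eigenvalues_pos i0
  have hX : A₀ᵀ * P₀ + P₀ * A₀ = P₀ * B₀ * B₀ᵀ * P₀ - 1 := by
    rw [← sub_eq_zero, ← hRic]; abel
  -- PSD of P₀ B₀ B₀ᵀ P₀
  have hBPH : (B₀ᵀ * P₀)ᴴ = P₀ * B₀ := by
    have hB : (B₀ᵀ)ᴴ = B₀ := by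
      ext i j
      simp
    rw [conjTranspose_mul, hP₀.1.eq, hB]
  have hM3 : (P₀ * B₀ * B₀ᵀ * P₀).PosSemidef := by
    have h4 : P₀ * B₀ * B₀ᵀ * P₀ = (B₀ᵀ * P₀)ᴴ * (B₀ᵀ * P₀) := by
      rw [hBPH]
      exact Matrix.mul_assoc _ _ _
    rw [h4]
    exact posSemidef_conjTranspose_mul_self _
  -- PSD of H - lam • 1
  have hS : (H - lam • 1).PosSemidef := shift_inf hH.1
  -- PSD of H C H - H
  have hdiagpsd : (Matrix.diagonal (fun i => c i - lam⁻¹)).PosSemidef :=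
    Matrix.PosSemidef.diagonal (fun i => sub_nonneg.mpr (by
      have h := hc i; rwa [one_div] at h))
  have hinv : lam⁻¹ * lam = 1 := inv_mul_cancel₀ hlampos.ne'
  have hM2 : (H * Matrix.diagonal c * H - H).PosSemidef := by
    have hdec : H * Matrix.diagonal c * H - H
        = Hᴴ * Matrix.diagonal (fun i => c i - lam⁻¹) * H
          + lam⁻¹ • ((H - lam • 1)ᴴ * (H - lam • 1)) + (H - lam • 1) := by
      rw [hH.1.eq, hS.1.eq]
      have hd : Matrix.diagonal (fun i => c i - lam⁻¹)
          = Matrix.diagonal c - lam⁻¹ • (1 : Matrix (Fin N) (Fin N) ℝ) := by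
        rw [Matrix.smul_one_eq_diagonal, ← Matrix.diagonal_sub]
      rw [hd]
      simp only [mul_sub, sub_mul, mul_smul_comm, smul_mul_assoc, mul_one, one_mul,
        smul_sub, smul_smul, smul_add]
      match_scalars <;> field_simp <;> ring
    rw [hdec]
    exact (((hdiagpsd.conjTranspose_mul_mul_same H).add
      (real_smul_posSemidef (posSemidef_conjTranspose_mul_self _)
        (inv_nonneg.mpr hlampos.le))).add hS)
  -- the key matrix identity
  have hId : (H - lam • 1) ⊗ₖ (1 : Matrix (Fin n) (Fin n) ℝ)
      + (H * Matrix.diagonal c * H - H) ⊗ₖ (P₀ * B₀ * B₀ᵀ * P₀)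
      = -((H ⊗ₖ (A₀ᵀ * P₀ + P₀ * A₀))
          - ((H * Matrix.diagonal c * H) ⊗ₖ (P₀ * B₀ * B₀ᵀ * P₀)))
        - lam • (1 : Matrix (Fin N × Fin n) (Fin N × Fin n) ℝ) := by
    rw [hX, sub_kron, sub_kron, kron_sub, ← Matrix.one_kronecker_one, ← Matrix.smul_kronecker]
    abel
  have hpsd : 0 ≤ ξ ⬝ᵥ ((H - lam • 1) ⊗ₖ (1 : Matrix (Fin n) (Fin n) ℝ)
      + (H * Matrix.diagonal c * H - H) ⊗ₖ (P₀ * B₀ * B₀ᵀ * P₀)) *ᵥ ξ :=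
    real_dot_nonneg ((kron_posSemidef hS Matrix.PosSemidef.one).add
      (kron_posSemidef hM2 hM3)) ξ
  rw [hId, Matrix.sub_mulVec, Matrix.neg_mulVec, dotProduct_sub, dotProduct_neg,
    smul_mulVec, Matrix.one_mulVec, dotProduct_smul, smul_eq_mul] at hpsd
  have hfirst : ξ ⬝ᵥ ((H ⊗ₖ (A₀ᵀ * P₀ + P₀ * A₀))
      - ((H * Matrix.diagonal c * H) ⊗ₖ (P₀ * B₀ * B₀ᵀ * P₀))) *ᵥ ξ
      ≤ -lam * (_root_.enorm ξ) ^ 2 := by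
    rw [enorm_sq]
    linarith
  -- second part
  set mu := ⨆ p, hKron.eigenvalues p with hmudef
  have hub : ∀ x : Fin N × Fin n → ℝ, x ⬝ᵥ (H ⊗ₖ P₀) *ᵥ x ≤ mu * (x ⬝ᵥ x) := by
    intro x
    have h := real_dot_nonneg (shift_sup hKron) x
    rw [Matrix.sub_mulVec, dotProduct_sub, smul_mulVec, Matrix.one_mulVec,
      dotProduct_smul, smul_eq_mul] at h
    linarith
  have hmupos : 0 < mu := by
    set p0 : Fin N × Fin n := (⟨0, hN⟩, ⟨0, hn⟩) with hp0
    have h1 : (Pi.single p0 (1:ℝ)) ⬝ᵥ (H ⊗ₖ P₀) *ᵥ (Pi.single p0 1)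
        = H p0.1 p0.1 * P₀ p0.2 p0.2 := by
      rw [single_dot]
      rfl
    have h2 := hub (Pi.single p0 1)
    have h3 : (Pi.single p0 (1:ℝ)) ⬝ᵥ (Pi.single p0 (1:ℝ)) = 1 := by
      simp [dotProduct, Pi.single_apply]
    rw [h1, h3, mul_one] at h2
    have := posdef_diag_pos hH p0.1
    have := posdef_diag_pos hP₀ p0.2
    nlinarith
  refine ⟨hfirst, ?_⟩
  have hq := hub ξ
  have hnn : 0 ≤ lam / mu := (div_pos hlampos hmupos).le
  have h5 : (lam / mu) * (ξ ⬝ᵥ (H ⊗ₖ P₀) *ᵥ ξ) ≤ (lam / mu) * (mu * (ξ ⬝ᵥ ξ)) :=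
    mul_le_mul_of_nonneg_left hq hnn
  have h6 : (lam / mu) * (mu * (ξ ⬝ᵥ ξ)) = lam * (ξ ⬝ᵥ ξ) := by
    field_simp
  rw [enorm_sq]
  nlinarith [h5, h6]
end

section
/- Let H ∈ ℝ^{N×N} be symmetric positive definite, let β = diag(β₁, …, β_N) with all β_i > 0, and let P ∈ ℝ^{n×n} be symmetric positive semidefinite. Then for every ξ ∈ ℝ^{Nn}, ξᵀ (H β H ⊗ P) ξ ≥ λ_min(β)·λ_min(H) · ξᵀ (H ⊗ P) ξ. -/
open Matrix
open scoped Kronecker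

lemma psd_kron {N n : ℕ} {A : Matrix (Fin N) (Fin N) ℝ} {P : Matrix (Fin n) (Fin n) ℝ}
    (hA : A.PosSemidef) (hP : P.PosSemidef) : (A ⊗ₖ P).PosSemidef := by
  exact hA.kronecker hP


/-- For H symmetric positive definite, β = diag(β₁,…,β_N) with all β_i > 0, and P symmetric
positive semidefinite: ξᵀ (H β H ⊗ P) ξ ≥ λ_min(β)·λ_min(H)·ξᵀ (H ⊗ P) ξ for all ξ. -/
theorem HbetaH_kron_lower_bound (N n : ℕ) (hN : 0 < N)
    (H : Matrix (Fin N) (Fin N) ℝ) (hH : H.PosDef)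
    (b : Fin N → ℝ) (hb : ∀ i, 0 < b i)
    (P : Matrix (Fin n) (Fin n) ℝ) (hP : P.PosSemidef) :
    ∀ ξ : Fin N × Fin n → ℝ,
      (⨅ i, b i) * (⨅ j, hH.1.eigenvalues j) * (ξ ⬝ᵥ (H ⊗ₖ P) *ᵥ ξ)
        ≤ ξ ⬝ᵥ ((H * Matrix.diagonal b * H) ⊗ₖ P) *ᵥ ξ := by
  intro ξ
  haveI : Nonempty (Fin N) := ⟨⟨0, hN⟩⟩
  set a := ⨅ i, b i with ha
  set m := ⨅ j, hH.1.eigenvalues j with hm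
  have ha0 : 0 ≤ a := le_ciInf fun i => (hb i).le
  have hm0 : 0 ≤ m := le_ciInf fun i => (hH.eigenvalues_pos i).le
  -- β - a•1 is PSD
  have h1 : (Matrix.diagonal b - a • (1 : Matrix (Fin N) (Fin N) ℝ)).PosSemidef := by
    have : Matrix.diagonal b - a • (1 : Matrix (Fin N) (Fin N) ℝ)
        = Matrix.diagonal (fun i => b i - a) := by
      rw [Matrix.smul_one_eq_diagonal, Matrix.diagonal_sub]
    rw [this]
    exact Matrix.posSemidef_diagonal_iff.mpr fun i =>
      sub_nonneg.mpr (ciInf_le (Set.Finite.bddBelow (Set.finite_range b)) i)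
  -- H*H - m•H is PSD
  have h2 : (H * H - m • H).PosSemidef := by
    have hspec := hH.1.spectral_theorem
    set U := (hH.1.eigenvectorUnitary : Matrix (Fin N) (Fin N) ℝ)
    set D := Matrix.diagonal (RCLike.ofReal ∘ hH.1.eigenvalues : Fin N → ℝ)
    have hU : star U * U = 1 := (Matrix.mem_unitaryGroup_iff').mp hH.1.eigenvectorUnitary.2
    have key : H * H - m • H = U * (Matrix.diagonal
        (fun i => hH.1.eigenvalues i * hH.1.eigenvalues i - m * hH.1.eigenvalues i)) * Uᴴ := by
      have : Matrix.diagonal (fun i => hH.1.eigenvalues i * hH.1.eigenvalues i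
          - m * hH.1.eigenvalues i) = D * D - m • D := by
        rw [Matrix.diagonal_mul_diagonal, ← Matrix.diagonal_smul, Matrix.diagonal_sub]
        rfl
      rw [this, hspec]
      simp only [Matrix.mul_sub, Matrix.sub_mul, Matrix.mul_smul, Matrix.smul_mul]
      congr 1
      calc U * D * star U * (U * D * star U) = U * D * (star U * U) * D * star U := by
            simp only [Matrix.mul_assoc]
        _ = U * (D * D) * star U := by rw [hU]; simp only [Matrix.mul_one, Matrix.mul_assoc]
    rw [key]
    refine Matrix.PosSemidef.mul_mul_conjTranspose_same ?_ U
    refine Matrix.posSemidef_diagonal_iff.mpr fun i => ?_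
    have h1 : m ≤ hH.1.eigenvalues i := ciInf_le (Set.Finite.bddBelow (Set.finite_range _)) i
    nlinarith [hH.eigenvalues_pos i]
  -- HβH - a*m•H is PSD
  have h3 : (H * Matrix.diagonal b * H - (a * m) • H).PosSemidef := by
    have e1 : H * Matrix.diagonal b * H - (a * m) • H
        = Hᴴ * (Matrix.diagonal b - a • 1) * H + a • (H * H - m • H) := by
      rw [hH.1.eq]
      simp only [Matrix.mul_sub, Matrix.sub_mul, Matrix.smul_mul, Matrix.mul_smul,
        Matrix.mul_one, Matrix.one_mul, smul_smul, smul_sub, mul_comm a m]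
      abel
    rw [e1]
    refine (h1.conjTranspose_mul_mul_same H).add (.of_dotProduct_mulVec_nonneg (by rw [Matrix.IsHermitian, Matrix.conjTranspose_smul, h2.1.eq, star_trivial]) fun x => ?_)
    rw [Matrix.smul_mulVec, dotProduct_smul]
    exact mul_nonneg ha0 (h2.dotProduct_mulVec_nonneg x)
  -- conclude
  have h4 := (psd_kron h3 hP).dotProduct_mulVec_nonneg ξ
  have e2 : ((H * Matrix.diagonal b * H - (a * m) • H) ⊗ₖ P)
      = (H * Matrix.diagonal b * H) ⊗ₖ P - (a * m) • (H ⊗ₖ P) := by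
    ext ⟨i, j⟩ ⟨k, l⟩
    simp [Matrix.kroneckerMap_apply, Matrix.sub_apply, Matrix.smul_apply, sub_mul, mul_assoc]
  rw [e2] at h4
  simp only [Matrix.sub_mulVec, dotProduct_sub, Matrix.smul_mulVec,
    dotProduct_smul, smul_eq_mul, star_trivial] at h4
  linarith
end
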